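/- For integers k ≥ 1 and 0 ≤ i ≤ k define Q̃_{k,i}(t) = (1/2)·C(2k,2i)·(1+t)^{2k−2i} + (1/2)·Σ_{j=i}^{k} C(2k,2j)·(1−t)^{2k−2j}·C(j,i)·(−4t)^{j−i}. Then for all integers 0 ≤ i ≤ k and all real t, (1+i)(1+k)·Q̃_{k+2,i+1}(t) = (1+i)(2+k)·(1+t)²·Q̃_{k+1,i+1}(t) + (2+k)(2+2k−i)·Q̃_{k+1,i}(t). -/
import Mathlib

open Finset

/-- The polynomial `Q̃_{k,i}(t)` : the `ρ* = 0` variant of `Q_{k,i}`. -/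
noncomputable def Qtilde (k i : ℕ) (t : ℝ) : ℝ :=
  (1/2) * ((2*k).choose (2*i) : ℝ) * (1+t)^(2*k-2*i)
    + (1/2) * ∑ j ∈ Finset.Icc i k,
        ((2*k).choose (2*j) : ℝ) * (1-t)^(2*k-2*j) * (j.choose i : ℝ) * (-4*t)^(j-i)

lemma sum_Icc_shift (a b : ℕ) (f : ℕ → ℝ) :
    ∑ j ∈ Finset.Icc (a+1) (b+1), f j = ∑ m ∈ Finset.Icc a b, f (m+1) := by
  rw [← Finset.map_add_right_Icc a b 1, Finset.sum_map]
  rfl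

lemma keyG (k i m : ℕ) :
    ((i:ℝ)+1)*((k:ℝ)+1) * (((2*k+4).choose (2*m+2) : ℝ) * (((m+1).choose (i+1) : ℕ) : ℝ))
    + ((i:ℝ)+1)*((k:ℝ)+2) * (((2*k+2).choose (2*m) : ℝ) * ((m.choose (i+1) : ℕ) : ℝ))
    = ((i:ℝ)+1)*((k:ℝ)+2) * (((2*k+2).choose (2*m+2) : ℝ) * (((m+1).choose (i+1) : ℕ) : ℝ))
    + ((k:ℝ)+2)*(2*(k:ℝ)+2-(i:ℝ)) * (((2*k+2).choose (2*m) : ℝ) * ((m.choose i : ℕ) : ℝ)) := by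
  rcases lt_or_ge m i with hmi | hmi
  · rw [Nat.choose_eq_zero_of_lt (by omega : m+1 < i+1),
      Nat.choose_eq_zero_of_lt (by omega : m < i+1),
      Nat.choose_eq_zero_of_lt (by omega : m < i)]
    push_cast; ring
  rcases le_or_gt (k+2) m with hmk | hmk
  · rw [Nat.choose_eq_zero_of_lt (by omega : 2*k+4 < 2*m+2),
      Nat.choose_eq_zero_of_lt (by omega : 2*k+2 < 2*m),
      Nat.choose_eq_zero_of_lt (by omega : 2*k+2 < 2*m+2)]
    push_cast; ring
  rcases eq_or_lt_of_le (by omega : m ≤ k+1) with hmk1 | hmk1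
  · -- top case m = k+1
    subst hmk1
    rw [show 2*(k+1)+2 = 2*k+4 from by ring, show 2*(k+1) = 2*k+2 from by ring]
    rw [Nat.choose_self, Nat.choose_eq_zero_of_lt (show 2*k+2 < 2*k+4 by omega),
      Nat.choose_self, show k+1+1 = (k+1)+1 from rfl, Nat.choose_succ_succ]
    have f1 : (((k+1).choose (i+1) : ℕ) : ℝ) * ((i:ℝ)+1)
        = (((k+1).choose i : ℕ):ℝ) * ((k:ℝ)+1-(i:ℝ)) := by
      have h := congrArg (Nat.cast (R := ℝ)) (Nat.choose_succ_right_eq (k+1) i)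
      push_cast [Nat.cast_sub (show i ≤ k+1 by omega)] at h
      linear_combination h
    push_cast
    linear_combination (2*(k:ℝ)+3) * f1
  · -- generic case i ≤ m ≤ k
    have hmk' : m ≤ k := by omega
    have a1 : (2*k+3) * ((2*k+2).choose (2*m)) = (2*k+3).choose (2*m+1) * (2*m+1) := by
      simpa [Nat.succ_eq_add_one, show 2*k+2+1 = 2*k+3 from by omega]
        using Nat.add_one_mul_choose_eq (2*k+2) (2*m)
    have a2 : (2*k+4) * ((2*k+3).choose (2*m+1)) = (2*k+4).choose (2*m+2) * (2*m+2) := by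
      simpa [Nat.succ_eq_add_one, show 2*k+3+1 = 2*k+4 from by omega,
        show 2*m+1+1 = 2*m+2 from by omega]
        using Nat.add_one_mul_choose_eq (2*k+3) (2*m+1)
    have h1 : (((2*k+4).choose (2*m+2) : ℕ):ℝ) * ((2*(m:ℝ)+2)*(2*(m:ℝ)+1))
        = (((2*k+2).choose (2*m) : ℕ):ℝ) * ((2*(k:ℝ)+4)*(2*(k:ℝ)+3)) := by
      have a1' := congrArg (Nat.cast (R:=ℝ)) a1
      have a2' := congrArg (Nat.cast (R:=ℝ)) a2
      push_cast at a1' a2'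
      linear_combination (-(2*(m:ℝ)+1)) * a2' + (-(2*(k:ℝ)+4)) * a1'
    have b2 : (2*k+2).choose (2*m+2) * (2*m+2) = (2*k+2).choose (2*m+1) * (2*k+1-2*m) := by
      simpa [show 2*k+2-(2*m+1) = 2*k+1-2*m from by omega]
        using Nat.choose_succ_right_eq (2*k+2) (2*m+1)
    have h2 : (((2*k+2).choose (2*m+2) : ℕ):ℝ) * ((2*(m:ℝ)+2)*(2*(m:ℝ)+1))
        = (((2*k+2).choose (2*m) : ℕ):ℝ) * ((2*(k:ℝ)+2-2*(m:ℝ))*(2*(k:ℝ)+1-2*(m:ℝ))) := by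
      have b1' := congrArg (Nat.cast (R:=ℝ)) (Nat.choose_succ_right_eq (2*k+2) (2*m))
      have b2' := congrArg (Nat.cast (R:=ℝ)) b2
      push_cast [Nat.cast_sub (show 2*m ≤ 2*k+2 by omega),
        Nat.cast_sub (show 2*m ≤ 2*k+1 by omega)] at b1' b2'
      linear_combination (2*(m:ℝ)+1) * b2' + (2*(k:ℝ)+1-2*(m:ℝ)) * b1'
    have h3 : ((m:ℝ)+1) * ((m.choose i : ℕ):ℝ) = (((m+1).choose (i+1) : ℕ):ℝ) * ((i:ℝ)+1) := by
      have c := congrArg (Nat.cast (R:=ℝ)) (Nat.add_one_mul_choose_eq m i)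
      push_cast at c
      linear_combination c
    have h4 : ((m.choose (i+1) : ℕ):ℝ) * ((i:ℝ)+1) = ((m.choose i : ℕ):ℝ) * ((m:ℝ)-(i:ℝ)) := by
      have c := congrArg (Nat.cast (R:=ℝ)) (Nat.choose_succ_right_eq m i)
      push_cast [Nat.cast_sub hmi] at c
      linear_combination c
    have hK : ((i:ℝ)+1) * ((2*(m:ℝ)+2)*(2*(m:ℝ)+1)) ≠ 0 := by positivity
    refine mul_left_cancel₀ hK ?_
    linear_combination
      (((i:ℝ)+1)^2*((k:ℝ)+1)*(((m+1).choose (i+1) : ℕ):ℝ)) * h1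
      - (((i:ℝ)+1)^2*((k:ℝ)+2)*(((m+1).choose (i+1) : ℕ):ℝ)) * h2
      - (((k:ℝ)+1)*((i:ℝ)+1)*(((2*k+2).choose (2*m) : ℕ):ℝ)*((2*(k:ℝ)+4)*(2*(k:ℝ)+3))
         - ((k:ℝ)+2)*((i:ℝ)+1)*(((2*k+2).choose (2*m) : ℕ):ℝ)*((2*(k:ℝ)+2-2*(m:ℝ))*(2*(k:ℝ)+1-2*(m:ℝ)))) * h3
      + (((k:ℝ)+2)*((i:ℝ)+1)*((2*(m:ℝ)+2)*(2*(m:ℝ)+1))*(((2*k+2).choose (2*m) : ℕ):ℝ)) * h4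

/-- For all integers `0 ≤ i ≤ k` and all real `t`,
`(1+i)(1+k) Q̃_{k+2,i+1}(t) = (1+i)(2+k)(1+t)² Q̃_{k+1,i+1}(t) + (2+k)(2+2k−i) Q̃_{k+1,i}(t)`. -/
theorem stmt_14 (k i : ℕ) (hik : i ≤ k) (t : ℝ) :
    (1+(i:ℝ)) * (1+(k:ℝ)) * Qtilde (k+2) (i+1) t
      = (1+(i:ℝ)) * (2+(k:ℝ)) * (1+t)^2 * Qtilde (k+1) (i+1) t
        + (2+(k:ℝ)) * (2+2*(k:ℝ)-(i:ℝ)) * Qtilde (k+1) i t := by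
  have E1 : (∑ j ∈ Finset.Icc (i+1) (k+2),
        (((2*k+4).choose (2*j) : ℕ):ℝ) * (1-t)^(2*k+4-2*j) * ((j.choose (i+1) : ℕ):ℝ) * (-4*t)^(j-(i+1)))
      = ∑ m ∈ Finset.Icc i (k+1),
        (((2*k+4).choose (2*m+2) : ℕ):ℝ) * (((m+1).choose (i+1) : ℕ):ℝ)
          * ((1-t)^(2*k+2-2*m) * (-4*t)^(m-i)) := by
    rw [show k+2 = (k+1)+1 from rfl, sum_Icc_shift i (k+1)]
    refine Finset.sum_congr rfl fun m hm => ?_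
    rw [show 2*(m+1) = 2*m+2 from by ring, show 2*k+4-(2*m+2) = 2*k+2-2*m from by omega,
      show m+1-(i+1) = m-i from by omega]
    ring
  have E2a : (1-t)^2 * (∑ j ∈ Finset.Icc (i+1) (k+1),
        (((2*k+2).choose (2*j) : ℕ):ℝ) * (1-t)^(2*k+2-2*j) * ((j.choose (i+1) : ℕ):ℝ) * (-4*t)^(j-(i+1)))
      = ∑ m ∈ Finset.Icc i (k+1),
        (((2*k+2).choose (2*m+2) : ℕ):ℝ) * (((m+1).choose (i+1) : ℕ):ℝ)
          * ((1-t)^(2*k+2-2*m) * (-4*t)^(m-i)) := by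
    rw [sum_Icc_shift i k, Finset.mul_sum,
      Finset.sum_Icc_succ_top (show i ≤ k+1 by omega)]
    rw [show 2*(k+1)+2 = 2*k+4 from by ring,
      Nat.choose_eq_zero_of_lt (show 2*k+2 < 2*k+4 by omega)]
    rw [Nat.cast_zero, zero_mul, zero_mul, add_zero]
    refine Finset.sum_congr rfl fun m hm => ?_
    have hmk : m ≤ k := (Finset.mem_Icc.mp hm).2
    have hp : (1-t)^(2*k+2-2*m) = (1-t)^2 * (1-t)^(2*k+2-2*(m+1)) := by
      rw [← pow_add]; congr 1; omega
    rw [hp, show 2*(m+1) = 2*m+2 from by ring, show m+1-(i+1) = m-i from by omega]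
    ring
  have E2b : (-4*t) * (∑ j ∈ Finset.Icc (i+1) (k+1),
        (((2*k+2).choose (2*j) : ℕ):ℝ) * (1-t)^(2*k+2-2*j) * ((j.choose (i+1) : ℕ):ℝ) * (-4*t)^(j-(i+1)))
      = ∑ m ∈ Finset.Icc i (k+1),
        (((2*k+2).choose (2*m) : ℕ):ℝ) * ((m.choose (i+1) : ℕ):ℝ)
          * ((1-t)^(2*k+2-2*m) * (-4*t)^(m-i)) := by
    rw [Finset.Icc_eq_cons_Ioc (show i ≤ k+1 by omega), Finset.sum_cons, ← Finset.Icc_add_one_left_eq_Ioc,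
      Nat.choose_succ_self, Nat.cast_zero, mul_zero, zero_mul, zero_add, Finset.mul_sum]
    refine Finset.sum_congr rfl fun j hj => ?_
    have hij : i+1 ≤ j := (Finset.mem_Icc.mp hj).1
    rw [show j-i = (j-(i+1))+1 from by omega, pow_succ]
    ring
  have E3 : (∑ j ∈ Finset.Icc i (k+1),
        (((2*k+2).choose (2*j) : ℕ):ℝ) * (1-t)^(2*k+2-2*j) * ((j.choose i : ℕ):ℝ) * (-4*t)^(j-i))
      = ∑ m ∈ Finset.Icc i (k+1),
        (((2*k+2).choose (2*m) : ℕ):ℝ) * ((m.choose i : ℕ):ℝ)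
          * ((1-t)^(2*k+2-2*m) * (-4*t)^(m-i)) :=
    Finset.sum_congr rfl fun m _ => by ring
  have HS : (1+(i:ℝ))*(1+(k:ℝ)) * (∑ j ∈ Finset.Icc (i+1) (k+2),
        (((2*k+4).choose (2*j) : ℕ):ℝ) * (1-t)^(2*k+4-2*j) * ((j.choose (i+1) : ℕ):ℝ) * (-4*t)^(j-(i+1)))
      = (1+(i:ℝ))*(2+(k:ℝ))*(1+t)^2 * (∑ j ∈ Finset.Icc (i+1) (k+1),
        (((2*k+2).choose (2*j) : ℕ):ℝ) * (1-t)^(2*k+2-2*j) * ((j.choose (i+1) : ℕ):ℝ) * (-4*t)^(j-(i+1)))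
      + (2+(k:ℝ))*(2+2*(k:ℝ)-(i:ℝ)) * (∑ j ∈ Finset.Icc i (k+1),
        (((2*k+2).choose (2*j) : ℕ):ℝ) * (1-t)^(2*k+2-2*j) * ((j.choose i : ℕ):ℝ) * (-4*t)^(j-i)) := by
    rw [E1, E3]
    rw [show (1+(i:ℝ))*(2+(k:ℝ))*(1+t)^2 * (∑ j ∈ Finset.Icc (i+1) (k+1),
        (((2*k+2).choose (2*j) : ℕ):ℝ) * (1-t)^(2*k+2-2*j) * ((j.choose (i+1) : ℕ):ℝ) * (-4*t)^(j-(i+1)))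
      = (1+(i:ℝ))*(2+(k:ℝ)) * ((1-t)^2 * (∑ j ∈ Finset.Icc (i+1) (k+1),
        (((2*k+2).choose (2*j) : ℕ):ℝ) * (1-t)^(2*k+2-2*j) * ((j.choose (i+1) : ℕ):ℝ) * (-4*t)^(j-(i+1))))
        - (1+(i:ℝ))*(2+(k:ℝ)) * ((-4*t) * (∑ j ∈ Finset.Icc (i+1) (k+1),
        (((2*k+2).choose (2*j) : ℕ):ℝ) * (1-t)^(2*k+2-2*j) * ((j.choose (i+1) : ℕ):ℝ) * (-4*t)^(j-(i+1))))
      from by ring]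
    rw [E2a, E2b, Finset.mul_sum, Finset.mul_sum, Finset.mul_sum, Finset.mul_sum,
      ← Finset.sum_sub_distrib, ← Finset.sum_add_distrib]
    refine Finset.sum_congr rfl fun m _ => ?_
    linear_combination ((1-t)^(2*k+2-2*m) * (-4*t)^(m-i)) * keyG k i m
  have HA : (1+(i:ℝ))*(1+(k:ℝ)) * ((((2*k+4).choose (2*i+2) : ℕ):ℝ) * (1+t)^(2*k+4-(2*i+2)))
      = (1+(i:ℝ))*(2+(k:ℝ))*(1+t)^2 * ((((2*k+2).choose (2*i+2) : ℕ):ℝ) * (1+t)^(2*k+2-(2*i+2)))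
      + (2+(k:ℝ))*(2+2*(k:ℝ)-(i:ℝ)) * ((((2*k+2).choose (2*i) : ℕ):ℝ) * (1+t)^(2*k+2-2*i)) := by
    have h := keyG k i i
    rw [Nat.choose_self, Nat.choose_succ_self, Nat.choose_self] at h
    rw [show 2*k+4-(2*i+2) = 2*k+2-2*i from by omega,
      show 2*k+2-(2*i+2) = 2*k-2*i from by omega]
    have hp : (1+t)^(2*k+2-2*i) = (1+t)^2 * (1+t)^(2*k-2*i) := by
      rw [← pow_add]; congr 1; omega
    rw [hp]
    push_cast at h
    linear_combination ((1+t)^2*(1+t)^(2*k-2*i)) * h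
  simp only [Qtilde, show 2*(k+2) = 2*k+4 from by ring, show 2*(i+1) = 2*i+2 from by ring,
    show 2*(k+1) = 2*k+2 from by ring]
  linear_combination (1/2 : ℝ) * HA + (1/2 : ℝ) * HS
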